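/- For the sequence u_n = N_n / (φ(N_n) · log log N_n), the inequality u_n > u_{n+1} is equivalent to log(1 + log p_{n+1} / θ(p_n)) > log θ(p_{n+1}) / p_{n+1}. -/

import Mathlib

open Filter Topology Finset Real

/-- the k-th prime (1-indexed): `prim 1 = 2`. -/
noncomputable def prim (k : ℕ) : ℕ := Nat.nth Nat.Prime (k - 1)

/-- the primorial of order `n`: the product of the first `n` primes. -/
noncomputable def primorialN (n : ℕ) : ℕ := ∏ k ∈ Finset.Icc 1 n, prim k

/-- Chebyshev's first summatory function `θ(x) = ∑_{p ≤ x} log p`. -/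
noncomputable def cheb (x : ℝ) : ℝ :=
  ∑ q ∈ Finset.filter Nat.Prime (Finset.Iic ⌊x⌋₊), Real.log q

/-- the Nicolas ratio `u n = N_n / (φ(N_n) log log N_n)`. -/
noncomputable def u (n : ℕ) : ℝ :=
  (primorialN n : ℝ) / (Nat.totient (primorialN n) * Real.log (Real.log (primorialN n)))

/-- the Dedekind `Ψ` function (real-valued). -/
noncomputable def psi (n : ℕ) : ℝ := n * ∏ p ∈ n.primeFactors, (1 + 1 / (p : ℝ))

/-- the ratio `v n = Ψ(N_n)/(N_n log log N_n)`. -/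
noncomputable def v (n : ℕ) : ℝ :=
  psi (primorialN n) / (primorialN n * Real.log (Real.log (primorialN n)))

lemma prim_prime (k : ℕ) : (prim k).Prime := Nat.prime_nth_prime _

lemma two_le_prim (k : ℕ) : 2 ≤ prim k := (prim_prime k).two_le

lemma primorialN_succ (n : ℕ) : primorialN (n + 1) = primorialN n * prim (n + 1) := by
  unfold primorialN
  exact Finset.prod_Icc_succ_top (by omega) _

lemma primorialN_pos (n : ℕ) : 0 < primorialN n :=
  Finset.prod_pos fun k _ => (prim_prime k).pos

lemma prim_not_dvd (n : ℕ) : ¬ prim (n + 1) ∣ primorialN n := by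
  intro h
  obtain ⟨k, hk, hdvd⟩ := ((prim_prime (n + 1)).prime).exists_mem_finset_dvd h
  rw [Finset.mem_Icc] at hk
  have heq : prim (n + 1) = prim k :=
    (Nat.prime_dvd_prime_iff_eq (prim_prime _) (prim_prime _)).mp hdvd
  have := Nat.nth_injective Nat.infinite_setOf_prime heq
  omega

lemma totient_primorial_succ (n : ℕ) :
    Nat.totient (primorialN (n + 1)) =
      Nat.totient (primorialN n) * (prim (n + 1) - 1) := by
  rw [primorialN_succ, Nat.totient_mul, Nat.totient_prime (prim_prime _)]
  exact (((prim_prime (n + 1)).coprime_iff_not_dvd).mpr (prim_not_dvd n)).symm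

lemma filter_prime_Iic_nth (m : ℕ) :
    Finset.filter Nat.Prime (Finset.Iic (Nat.nth Nat.Prime m)) =
      Finset.image (Nat.nth Nat.Prime) (Finset.Iic m) := by
  ext q
  simp only [Finset.mem_filter, Finset.mem_Iic, Finset.mem_image]
  constructor
  · rintro ⟨hle, hq⟩
    refine ⟨Nat.count Nat.Prime q, ?_, Nat.nth_count hq⟩
    rw [← Nat.nth_le_nth Nat.infinite_setOf_prime, Nat.nth_count hq]
    exact hle
  · rintro ⟨i, hi, rfl⟩
    exact ⟨(Nat.nth_le_nth Nat.infinite_setOf_prime).mpr hi, Nat.prime_nth_prime i⟩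

lemma cheb_prim (n : ℕ) (hn : 1 ≤ n) :
    cheb (prim n) = Real.log (primorialN n) := by
  have hcast : ((primorialN n : ℕ) : ℝ) = ∏ k ∈ Finset.Icc 1 n, ((prim k : ℕ) : ℝ) := by
    rw [primorialN]; push_cast; ring
  rw [hcast, Real.log_prod (fun k _ => Nat.cast_ne_zero.mpr (prim_prime k).ne_zero)]
  unfold cheb prim
  rw [Nat.floor_natCast, filter_prime_Iic_nth,
    Finset.sum_image (fun a _ b _ h => Nat.nth_injective Nat.infinite_setOf_prime h)]
  refine Finset.sum_nbij' (fun i => i + 1) (fun k => k - 1) (fun a ha => ?_)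
    (fun a ha => ?_) (fun a ha => ?_) (fun a ha => ?_) (fun a ha => ?_)
  · simp only [Finset.mem_Iic] at ha; simp only [Finset.mem_Icc]; omega
  · simp only [Finset.mem_Icc] at ha; simp only [Finset.mem_Iic]; omega
  · show a + 1 - 1 = a; omega
  · simp only [Finset.mem_Icc] at ha; show a - 1 + 1 = a; omega
  · rfl

lemma four_le_primorial (n : ℕ) (hn : 2 ≤ n) : 4 ≤ primorialN n := by
  have h1 : (2 : ℕ) ^ n ≤ primorialN n := by
    calc (2 : ℕ) ^ n = ∏ _k ∈ Finset.Icc 1 n, 2 := by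
          rw [Finset.prod_const, Nat.card_Icc]; norm_num
      _ ≤ primorialN n := Finset.prod_le_prod' fun k _ => two_le_prim k
  calc (4 : ℕ) = 2 ^ 2 := by norm_num
    _ ≤ 2 ^ n := Nat.pow_le_pow_right (by norm_num) hn
    _ ≤ primorialN n := h1

lemma one_lt_log_primorial (n : ℕ) (hn : 2 ≤ n) : 1 < Real.log (primorialN n) := by
  have h4 : (4 : ℝ) ≤ (primorialN n : ℝ) := by exact_mod_cast four_le_primorial n hn
  rw [Real.lt_log_iff_exp_lt (by linarith)]
  calc Real.exp 1 < 2.7182818286 := Real.exp_one_lt_d9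
    _ ≤ 4 := by norm_num
    _ ≤ _ := h4

theorem stmt2 (n : ℕ) (hn : 2 ≤ n) :
    u n > u (n + 1) ↔
      Real.log (1 + Real.log (prim (n + 1)) / cheb (prim n)) >
        Real.log (cheb (prim (n + 1))) / (prim (n + 1) : ℝ) := by
  set p : ℝ := (prim (n + 1) : ℝ) with hpdef
  have hp2 : (2 : ℝ) ≤ p := by rw [hpdef]; exact_mod_cast two_le_prim (n + 1)
  have hlogp : 0 < Real.log p := Real.log_pos (by linarith)
  have hA : (0 : ℝ) < (primorialN n : ℝ) := Nat.cast_pos.mpr (primorialN_pos n)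
  have hB : (0 : ℝ) < (Nat.totient (primorialN n) : ℝ) :=
    Nat.cast_pos.mpr (Nat.totient_pos.mpr (primorialN_pos n))
  set θ1 : ℝ := cheb (prim n) with hθ1def
  set θ2 : ℝ := cheb (prim (n + 1)) with hθ2def
  have hθ1 : θ1 = Real.log (primorialN n) := cheb_prim n (by omega)
  have hθ2 : θ2 = Real.log (primorialN (n + 1)) := cheb_prim (n + 1) (by omega)
  have h1θ1 : 1 < θ1 := hθ1 ▸ one_lt_log_primorial n hn
  have h1θ2 : 1 < θ2 := hθ2 ▸ one_lt_log_primorial (n + 1) (by omega)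
  have hθ21 : θ2 = θ1 + Real.log p := by
    rw [hpdef, hθ2, hθ1, primorialN_succ]
    push_cast
    rw [Real.log_mul (by positivity) (by positivity)]
  set L1 : ℝ := Real.log θ1 with hL1def
  set L2 : ℝ := Real.log θ2 with hL2def
  have hL1 : 0 < L1 := Real.log_pos h1θ1
  have hL2 : 0 < L2 := Real.log_pos h1θ2
  -- rewrite u values
  have hun : u n = (primorialN n : ℝ) / ((Nat.totient (primorialN n) : ℝ) * L1) := by
    rw [u, hL1def, hθ1]
  have hun1 : u (n + 1) =
      ((primorialN n : ℝ) * p) / ((Nat.totient (primorialN n) : ℝ) * (p - 1) * L2) := by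
    have h2 : 1 ≤ prim (n + 1) := by have := two_le_prim (n + 1); omega
    rw [hpdef, u, hL2def, hθ2, totient_primorial_succ, primorialN_succ]
    push_cast [Nat.cast_sub h2]
    ring
  -- rewrite RHS logs
  have hlhs : Real.log (1 + Real.log p / θ1) = L2 - L1 := by
    have : 1 + Real.log p / θ1 = θ2 / θ1 := by
      rw [hθ21]; field_simp
    rw [this, Real.log_div (by linarith) (by linarith)]
  rw [hun, hun1, hlhs]
  rw [gt_iff_lt, gt_iff_lt, div_lt_div_iff₀ (mul_pos (mul_pos hB (by linarith)) hL2) (mul_pos hB hL1),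
    div_lt_iff₀ (by linarith : (0:ℝ) < p)]
  constructor
  · intro h; nlinarith [mul_pos hA hB]
  · intro h; nlinarith [mul_pos hA hB, mul_pos (mul_pos hA hB) hL2]
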